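/- The barrier pushes the equilibrium deeper into the safe set: Suppose θ* ∈ S and ∇h(θ*) ≠ 0, and let μ ↦ θ̂_μ be a continuously differentiable curve defined on [0, μ*) with θ̂_0 = θ*, θ̂_μ ∈ S, and ∇Ĵ_μ(θ̂_μ) = 0 for all μ ∈ (0, μ*). Then there exists μ** ∈ (0, μ*] such that for every μ ∈ (0, μ**), h(θ̂_μ) > h(θ*). -/

import Mathlib

open Real Set
open scoped RealInnerProductSpace

set_option maxHeartbeats 2000000 in
theorem barrier_pushes_equilibrium_inward
    {n : ℕ} (hn : 1 ≤ n)
    (Jstar : ℝ) (θs : EuclideanSpace ℝ (Fin n))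
    (H : EuclideanSpace ℝ (Fin n) →L[ℝ] EuclideanSpace ℝ (Fin n))
    (Hsymm : ∀ x y : EuclideanSpace ℝ (Fin n), ⟪H x, y⟫ = ⟪x, H y⟫)
    (Hpos : ∀ x : EuclideanSpace ℝ (Fin n), x ≠ 0 → 0 < ⟪x, H x⟫)
    (J : EuclideanSpace ℝ (Fin n) → ℝ)
    (hJdef : ∀ θ, J θ = Jstar + (1 / 2) * ⟪θ - θs, H (θ - θs)⟫)
    (h : EuclideanSpace ℝ (Fin n) → ℝ) (hh : ContDiff ℝ 2 h)
    (S : Set (EuclideanSpace ℝ (Fin n))) (hSdef : S = {θ | 0 < h θ})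
    (hSne : S.Nonempty)
    (Jhat : ℝ → EuclideanSpace ℝ (Fin n) → ℝ)
    (hJhatdef : ∀ μ θ, Jhat μ θ = J θ - μ * Real.log (h θ))
    (hθsS : θs ∈ S) (hgθs : gradient h θs ≠ 0)
    (μstar : ℝ) (hμstar : 0 < μstar)
    (θhat : ℝ → EuclideanSpace ℝ (Fin n))
    (hC1 : ContDiffOn ℝ 1 θhat (Set.Ico 0 μstar))
    (h0 : θhat 0 = θs)
    (hmem : ∀ μ ∈ Set.Ioo 0 μstar, θhat μ ∈ S)
    (hcrit : ∀ μ ∈ Set.Ioo 0 μstar, gradient (Jhat μ) (θhat μ) = 0) :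
    ∃ μss, 0 < μss ∧ μss ≤ μstar ∧ ∀ μ ∈ Set.Ioo 0 μss, h θs < h (θhat μ) := by
  subst hSdef
  have hhs : 0 < h θs := hθsS
  have hdiff : Differentiable ℝ h := hh.differentiable (by norm_num)
  -- gradient of h is C¹ hence locally Lipschitz near θs
  have hgrad_cd : ContDiff ℝ 1 (gradient h) := by
    have h1 : ContDiff ℝ 1 (fderiv ℝ h) := hh.fderiv_right (by norm_num)
    exact ((InnerProductSpace.toDual ℝ
      (EuclideanSpace ℝ (Fin n))).symm.contDiff).comp h1
  obtain ⟨K, t, ht, hK⟩ := (hgrad_cd.contDiffAt (x := θs)).exists_lipschitzOnWith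
  obtain ⟨r, hr0, hrt⟩ := Metric.mem_nhds_iff.1 ht
  -- a ball where h > h θs / 2
  obtain ⟨r2, hr20, hr2⟩ : ∃ r2 > 0, ∀ x ∈ Metric.ball θs r2, h θs / 2 < h x := by
    have hcont : ContinuousAt h θs := hh.continuous.continuousAt
    have hmem2 : Ioi (h θs / 2) ∈ nhds (h θs) :=
      isOpen_Ioi.mem_nhds (by simp only [Set.mem_Ioi]; linarith)
    obtain ⟨r2, hr20, hsub⟩ := Metric.mem_nhds_iff.1 (hcont hmem2)
    exact ⟨r2, hr20, fun x hx => hsub hx⟩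
  set r3 := min r r2 with hr3
  have hr30 : 0 < r3 := lt_min hr0 hr20
  -- minimal eigenvalue of H
  haveI : Nonempty (Fin n) := ⟨⟨0, hn⟩⟩
  have hcontQ : Continuous fun x : EuclideanSpace ℝ (Fin n) => ⟪x, H x⟫ :=
    continuous_id.inner H.continuous
  obtain ⟨u, hu, hmin'⟩ := (isCompact_sphere (0 : EuclideanSpace ℝ (Fin n)) 1).exists_isMinOn
    (NormedSpace.sphere_nonempty.2 zero_le_one) hcontQ.continuousOn
  have hmin := isMinOn_iff.1 hmin'
  set lam := ⟪u, H u⟫ with hlam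
  have hu1 : ‖u‖ = 1 := by simpa using hu
  have hlam0 : 0 < lam := Hpos u (by intro h0u; rw [h0u] at hu1; simp at hu1)
  have hquad : ∀ x : EuclideanSpace ℝ (Fin n), lam * ‖x‖ ^ 2 ≤ ⟪x, H x⟫ := by
    intro x
    rcases eq_or_ne x 0 with rfl | hx
    · simp
    · have hxn : (0:ℝ) < ‖x‖ := norm_pos_iff.2 hx
      have hmemx : ‖x‖⁻¹ • x ∈ Metric.sphere (0 : EuclideanSpace ℝ (Fin n)) 1 := by
        simp [norm_smul, abs_of_pos (inv_pos.2 hxn), inv_mul_cancel₀ (ne_of_gt hxn)]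
      have h2 := hmin _ hmemx
      simp only [id_eq, map_smul] at h2
      rw [real_inner_smul_left, real_inner_smul_right] at h2
      have h3 := mul_le_mul_of_nonneg_left h2 (le_of_lt (mul_pos hxn hxn))
      have h4 : ‖x‖ * ‖x‖ * (‖x‖⁻¹ * (‖x‖⁻¹ * ⟪x, H x⟫)) = ⟪x, H x⟫ := by
        field_simp
      rw [h4] at h3
      nlinarith [h3]
  -- continuity of θhat at 0 within Ico
  have hcw : ContinuousWithinAt θhat (Set.Ico 0 μstar) 0 :=
    hC1.continuousOn 0 ⟨le_refl 0, hμstar⟩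
  rw [Metric.continuousWithinAt_iff] at hcw
  obtain ⟨δ, hδ0, hδ⟩ := hcw r3 hr30
  have hKpos : (0:ℝ) < 2 * ((K:ℝ) + 1) := by positivity
  refine ⟨min (min μstar δ) (h θs * lam / (2 * ((K:ℝ) + 1))), ?_, ?_, ?_⟩
  · exact lt_min (lt_min hμstar hδ0) (by positivity)
  · exact le_trans (min_le_left _ _) (min_le_left _ _)
  intro μ hμ
  obtain ⟨hμ0, hμlt⟩ := hμ
  have hμμs : μ < μstar := lt_of_lt_of_le hμlt (le_trans (min_le_left _ _) (min_le_left _ _))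
  have hμδ : μ < δ := lt_of_lt_of_le hμlt (le_trans (min_le_left _ _) (min_le_right _ _))
  have hμK : μ < h θs * lam / (2 * ((K:ℝ) + 1)) := lt_of_lt_of_le hμlt (min_le_right _ _)
  set θh := θhat μ with hθhdef
  have hθhS : 0 < h θh := hmem μ ⟨hμ0, hμμs⟩
  have hball : θh ∈ Metric.ball θs r3 := by
    have hmem3 : μ ∈ Set.Ico 0 μstar := ⟨le_of_lt hμ0, hμμs⟩
    have := hδ hmem3 (by simpa [Real.dist_eq, abs_of_pos hμ0] using hμδ)
    rw [h0] at this
    simpa [Metric.mem_ball] using this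
  have hθh2 : h θs / 2 < h θh := hr2 _ (Metric.ball_subset_ball (min_le_right r r2) hball)
  set d := θh - θs with hd
  -- fderiv vanishes at the critical point
  have hcrit0 : fderiv ℝ (Jhat μ) θh = 0 := by
    have h2 : (InnerProductSpace.toDual ℝ (EuclideanSpace ℝ (Fin n))).symm
        (fderiv ℝ (Jhat μ) θh) = 0 := hcrit μ ⟨hμ0, hμμs⟩
    have h3 : (InnerProductSpace.toDual ℝ (EuclideanSpace ℝ (Fin n))).symm
        (fderiv ℝ (Jhat μ) θh)
        = (InnerProductSpace.toDual ℝ (EuclideanSpace ℝ (Fin n))).symm 0 := by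
      simpa using h2
    exact (InnerProductSpace.toDual ℝ (EuclideanSpace ℝ (Fin n))).symm.injective h3
  -- explicit derivative of Jhat μ at θh
  have hsub : HasFDerivAt (fun θ : EuclideanSpace ℝ (Fin n) => θ - θs)
      (ContinuousLinearMap.id ℝ (EuclideanSpace ℝ (Fin n))) θh :=
    (hasFDerivAt_id θh).sub_const θs
  have hgH : HasFDerivAt (fun θ : EuclideanSpace ℝ (Fin n) => H (θ - θs)) H θh := by
    exact H.hasFDerivAt.comp θh hsub
  have hq : HasFDerivAt (fun θ : EuclideanSpace ℝ (Fin n) => ⟪θ - θs, H (θ - θs)⟫)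
      ((fderivInnerCLM ℝ (θh - θs, H (θh - θs))).comp
        ((ContinuousLinearMap.id ℝ (EuclideanSpace ℝ (Fin n))).prod H)) θh :=
    hsub.inner ℝ hgH
  have hJ' : HasFDerivAt J ((1/2 : ℝ) • ((fderivInnerCLM ℝ (θh - θs, H (θh - θs))).comp
      ((ContinuousLinearMap.id ℝ (EuclideanSpace ℝ (Fin n))).prod H))) θh := by
    have h4 := (hq.const_mul (1/2 : ℝ)).const_add Jstar
    have hJfun : J = fun θ => Jstar + (1/2 : ℝ) * ⟪θ - θs, H (θ - θs)⟫ := funext hJdef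
    rw [hJfun]
    exact h4
  have hlog : HasFDerivAt (fun θ => Real.log (h θ)) ((h θh)⁻¹ • fderiv ℝ h θh) θh :=
    ((hdiff θh).hasFDerivAt).log (ne_of_gt hθhS)
  have hJh : HasFDerivAt (Jhat μ)
      ((1/2 : ℝ) • ((fderivInnerCLM ℝ (θh - θs, H (θh - θs))).comp
        ((ContinuousLinearMap.id ℝ (EuclideanSpace ℝ (Fin n))).prod H))
        - μ • ((h θh)⁻¹ • fderiv ℝ h θh)) θh := by
    have h5 := hJ'.sub (hlog.const_mul μ)
    have hJhfun : Jhat μ = fun θ => J θ - μ * Real.log (h θ) := funext (hJhatdef μ)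
    rw [hJhfun]
    exact h5
  have hzero : (1/2 : ℝ) • ((fderivInnerCLM ℝ (θh - θs, H (θh - θs))).comp
      ((ContinuousLinearMap.id ℝ (EuclideanSpace ℝ (Fin n))).prod H))
      - μ • ((h θh)⁻¹ • fderiv ℝ h θh) = 0 := by
    rw [← hJh.fderiv]; exact hcrit0
  have hvec : ∀ v, ⟪H d, v⟫ = μ * ((h θh)⁻¹ * ⟪gradient h θh, v⟫) := by
    intro v
    have h1 := congrArg (fun (L : EuclideanSpace ℝ (Fin n) →L[ℝ] ℝ) => L v) hzero
    simp only [ContinuousLinearMap.sub_apply, ContinuousLinearMap.smul_apply,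
      ContinuousLinearMap.comp_apply, ContinuousLinearMap.prod_apply,
      ContinuousLinearMap.coe_id', id_eq, fderivInnerCLM_apply,
      ContinuousLinearMap.zero_apply, smul_eq_mul] at h1
    have hfd : ⟪gradient h θh, v⟫ = fderiv ℝ h θh v := InnerProductSpace.toDual_symm_apply
    have hs1 : ⟪θh - θs, H v⟫ = ⟪H d, v⟫ := by rw [hd]; exact (Hsymm (θh - θs) v).symm
    have hs2 : ⟪v, H (θh - θs)⟫ = ⟪H d, v⟫ := by rw [hd]; exact real_inner_comm _ _
    rw [hs1, hs2, ← hfd] at h1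
    linarith
  have hdne : d ≠ 0 := by
    intro h0d
    apply hgθs
    have hθeq : θh = θs := by rw [hd] at h0d; rwa [sub_eq_zero] at h0d
    have h6 : (0:ℝ) = μ * ((h θs)⁻¹ * ⟪gradient h θs, gradient h θs⟫) := by
      have := hvec (gradient h θs)
      rw [h0d] at this
      simpa [hθeq] using this
    by_contra hne
    have hgg : 0 < ⟪gradient h θs, gradient h θs⟫ := by
      rw [real_inner_self_eq_norm_sq]
      have : 0 < ‖gradient h θs‖ := norm_pos_iff.2 hne
      positivity
    have := mul_pos hμ0 (mul_pos (inv_pos.2 hhs) hgg)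
    linarith
  have hQpos : 0 < ⟪d, H d⟫ := Hpos d hdne
  -- Taylor / mean value estimate
  set G := gradient h θh with hG
  have hsegsub : segment ℝ θh θs ⊆ t := by
    refine subset_trans ?_ (subset_trans (Metric.ball_subset_ball (min_le_left r r2)) hrt)
    exact (convex_ball θs r3).segment_subset hball (Metric.mem_ball_self hr30)
  have hmvt : ‖(h θs - ⟪G, θs⟫) - (h θh - ⟪G, θh⟫)‖ ≤ ((K:ℝ) * ‖d‖) * ‖θs - θh‖ := by
    refine Convex.norm_image_sub_le_of_norm_hasFDerivWithin_le
      (f := fun x => h x - ⟪G, x⟫) (f' := fun x => fderiv ℝ h x - innerSL ℝ G)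
      (fun x hx => ?_) (fun x hx => ?_) (convex_segment θh θs)
      (left_mem_segment ℝ θh θs) (right_mem_segment ℝ θh θs)
    · exact ((hdiff x).hasFDerivAt.sub ((innerSL ℝ G).hasFDerivAt)).hasFDerivWithinAt
    · have hxt : x ∈ t := hsegsub hx
      have hθht : θh ∈ t := hsegsub (left_mem_segment ℝ θh θs)
      have h1 : ‖gradient h x - G‖ ≤ (K:ℝ) * ‖x - θh‖ := by
        have := hK.dist_le_mul x hxt θh hθht
        simpa [dist_eq_norm] using this
      have h2 : ‖x - θh‖ ≤ ‖d‖ := by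
        rw [segment_eq_image'] at hx
        obtain ⟨s', hs', hxeq⟩ := hx
        rw [← hxeq]
        simp only [add_sub_cancel_left]
        rw [norm_smul]
        have : ‖θs - θh‖ = ‖d‖ := by rw [hd, norm_sub_rev]
        rw [this]
        rw [Real.norm_eq_abs, abs_of_nonneg hs'.1]
        nlinarith [norm_nonneg d, hs'.1, hs'.2]
      show ‖fderiv ℝ h x - innerSL ℝ G‖ ≤ (K:ℝ) * ‖d‖
      have h4 : fderiv ℝ h x - innerSL ℝ G = innerSL ℝ (gradient h x - G) := by
        ext v
        have hfd : ⟪gradient h x, v⟫ = fderiv ℝ h x v := InnerProductSpace.toDual_symm_apply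
        simp only [ContinuousLinearMap.sub_apply, innerSL_apply_apply, inner_sub_left, hfd]
      rw [h4, innerSL_apply_norm]
      calc ‖gradient h x - G‖ ≤ (K:ℝ) * ‖x - θh‖ := h1
        _ ≤ (K:ℝ) * ‖d‖ := mul_le_mul_of_nonneg_left h2 K.2
  have hnd : 0 < ‖d‖ := norm_pos_iff.2 hdne
  have hnorm : ‖θs - θh‖ = ‖d‖ := by rw [hd, norm_sub_rev]
  rw [hnorm] at hmvt
  have htay : h θs - h θh + ⟪G, d⟫ ≤ (K:ℝ) * ‖d‖ * ‖d‖ := by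
    have h1 : (h θs - ⟪G, θs⟫) - (h θh - ⟪G, θh⟫) = h θs - h θh + ⟪G, d⟫ := by
      rw [hd, inner_sub_right]; ring
    rw [h1] at hmvt
    calc h θs - h θh + ⟪G, d⟫ ≤ |h θs - h θh + ⟪G, d⟫| := le_abs_self _
      _ ≤ (K:ℝ) * ‖d‖ * ‖d‖ := by rw [← Real.norm_eq_abs]; exact hmvt
  -- final arithmetic
  have hquadd : lam * ‖d‖ ^ 2 ≤ ⟪d, H d⟫ := hquad d
  have hfrac : μ * (2 * ((K:ℝ) + 1)) < h θs * lam := (lt_div_iff₀ hKpos).1 hμK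
  have hGd : ⟪G, d⟫ * μ = h θh * ⟪d, H d⟫ := by
    have h1 := hvec d
    have h2 : ⟪H d, d⟫ = ⟪d, H d⟫ := Hsymm d d
    rw [h2] at h1
    have hhne : h θh ≠ 0 := ne_of_gt hθhS
    have h3 : h θh * ⟪d, H d⟫ = μ * ⟪G, d⟫ * (h θh * (h θh)⁻¹) := by
      rw [h1]; ring
    rw [mul_inv_cancel₀ hhne, mul_one] at h3
    linear_combination -h3
  have htay2 : h θs - h θh + ⟪G, d⟫ ≤ (K:ℝ) * ‖d‖ ^ 2 := by
    calc h θs - h θh + ⟪G, d⟫ ≤ (K:ℝ) * ‖d‖ * ‖d‖ := htay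
      _ = (K:ℝ) * ‖d‖ ^ 2 := by ring
  -- h θh * ⟪d,Hd⟫ ≥ (h θs / 2) * (lam * ‖d‖^2)
  have s1 : h θs / 2 * (lam * ‖d‖ ^ 2) ≤ h θh * ⟪d, H d⟫ := by
    have hl : 0 < lam * ‖d‖ ^ 2 := by positivity
    nlinarith [hθh2, hquadd, hl, hθhS]
  have s2 : μ * (((K:ℝ) + 1) * ‖d‖ ^ 2) < h θs / 2 * (lam * ‖d‖ ^ 2) := by
    have hd20 : 0 < ‖d‖ ^ 2 := by positivity
    nlinarith [hfrac, hd20]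
  have s3 : μ * (((K:ℝ) + 1) * ‖d‖ ^ 2) < ⟪G, d⟫ * μ := by
    rw [hGd]; exact lt_of_lt_of_le s2 s1
  have s4 : ((K:ℝ) + 1) * ‖d‖ ^ 2 < ⟪G, d⟫ := by
    rw [mul_comm μ] at s3
    exact (mul_lt_mul_iff_of_pos_right hμ0).1 s3
  have hd20 : 0 < ‖d‖ ^ 2 := by positivity
  have hK0 : (0:ℝ) ≤ (K:ℝ) := K.2
  linarith
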